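/- For integers m, d and nonnegative integer k with d >= k - m, the sum over i from 0 to k of C(m-i, i) * C(i+d, k-i) equals the sum over j from 0 to floor(k/2) of C(m+d-1-2j, k-2j). -/

import Mathlib

/-- The generalized binomial coefficient `C(a, b) = a(a-1)⋯(a-b+1)/b!`
for an integer `a` and a natural number `b`, valued in `ℚ`. -/
noncomputable def genChoose (a : ℤ) (b : ℕ) : ℚ :=
  (∏ i ∈ Finset.range b, ((a : ℚ) - i)) / (Nat.factorial b : ℚ)

lemma gc_zero (a : ℤ) : genChoose a 0 = 1 := by simp [genChoose]

lemma gc_pascal (a : ℤ) (b : ℕ) :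
    genChoose a (b+1) = genChoose (a-1) (b+1) + genChoose (a-1) b := by
  unfold genChoose
  push_cast
  have h1 : ∏ i ∈ Finset.range (b+1), ((a:ℚ) - i)
      = (∏ i ∈ Finset.range b, (((a:ℚ)-1) - i)) * a := by
    rw [Finset.prod_range_succ']
    simp only [Nat.cast_add, Nat.cast_one, Nat.cast_zero]
    congr 1
    · apply Finset.prod_congr rfl; intro i _; ring
    · ring
  have h2 : ∏ i ∈ Finset.range (b+1), (((a:ℚ)-1) - i)
      = (∏ i ∈ Finset.range b, (((a:ℚ)-1) - i)) * ((a:ℚ)-1-b) := by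
    rw [Finset.prod_range_succ]
  rw [h1, h2, Nat.factorial_succ]
  have hb : (Nat.factorial b : ℚ) ≠ 0 := by positivity
  have hb1 : ((b:ℚ)+1) ≠ 0 := by positivity
  push_cast
  field_simp
  ring

lemma gc_eq_zero (n : ℤ) (b : ℕ) (h0 : 0 ≤ n) (h1 : n < b) : genChoose n b = 0 := by
  unfold genChoose
  rw [Finset.prod_eq_zero (i := n.toNat)]
  · simp
  · simp [Finset.mem_range]; omega
  · have : ((n.toNat : ℤ) : ℚ) = (n : ℚ) := by norm_cast; omega
    push_cast at this ⊢
    rw [this]; ring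

lemma gc_self (n : ℕ) : genChoose (n : ℤ) n = 1 := by
  unfold genChoose
  have : ∏ i ∈ Finset.range n, (((n:ℤ):ℚ) - i) = (Nat.factorial n : ℚ) := by
    push_cast
    induction n with
    | zero => simp
    | succ n ih =>
      rw [Finset.prod_range_succ', Nat.factorial_succ]
      push_cast
      have : ∏ i ∈ Finset.range n, (((n:ℚ)+1) - (i+1)) = ∏ i ∈ Finset.range n, ((n:ℚ) - i) := by
        apply Finset.prod_congr rfl; intro i _; ring
      rw [this, ih]
      ring
  rw [this]
  field_simp


noncomputable def Lsum (m d : ℤ) (K : ℕ) : ℚ :=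
  ∑ i ∈ Finset.range (K + 1), genChoose (m - i) i * genChoose ((i : ℤ) + d) (K - i)
noncomputable def Tsum (m d : ℤ) (K : ℕ) : ℚ :=
  ∑ j ∈ Finset.range (K / 2 + 1), genChoose (m + d - 1 - 2 * j) (K - 2 * j)

lemma T_shift (m d m' d' : ℤ) (K : ℕ) (h : m + d = m' + d') : Tsum m d K = Tsum m' d' K := by
  unfold Tsum
  apply Finset.sum_congr rfl
  intro j _
  congr 1
  omega

lemma L_rec_d (m d : ℤ) (k : ℕ) :
    Lsum m d (k+1) = Lsum m (d-1) (k+1) + Lsum m (d-1) k := by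
  have key : Lsum m d (k+1) - Lsum m (d-1) (k+1) = Lsum m (d-1) k := by
    unfold Lsum
    rw [← Finset.sum_sub_distrib, Finset.sum_range_succ]
    have htop : genChoose (m - ↑(k+1)) (k+1) * genChoose ((↑(k+1) : ℤ) + d) (k+1-(k+1))
        - genChoose (m - ↑(k+1)) (k+1) * genChoose ((↑(k+1) : ℤ) + (d-1)) (k+1-(k+1)) = 0 := by
      simp [gc_zero]
    rw [htop, add_zero]
    apply Finset.sum_congr rfl
    intro i hi
    simp only [Finset.mem_range] at hi
    have hik : i ≤ k := by omega
    have e1 : k + 1 - i = (k - i) + 1 := by omega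
    rw [e1, ← mul_sub]
    have e2 : ((i:ℤ) + d) - 1 = (i:ℤ) + (d-1) := by ring
    have := gc_pascal ((i:ℤ) + d) (k - i)
    rw [e2] at this
    rw [this]
    ring
  linarith

lemma T_rec_d (m d : ℤ) (k : ℕ) :
    Tsum m d (k+1) = Tsum m (d-1) (k+1) + Tsum m (d-1) k := by
  have key : Tsum m d (k+1) - Tsum m (d-1) (k+1) = Tsum m (d-1) k := by
    unfold Tsum
    rw [← Finset.sum_sub_distrib]
    have congr_part : ∀ S : Finset ℕ, S = Finset.range (k/2+1) →
        ∑ j ∈ S, (genChoose (m + d - 1 - 2*j) (k+1 - 2*j)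
          - genChoose (m + (d-1) - 1 - 2*j) (k+1 - 2*j))
        = ∑ j ∈ Finset.range (k/2+1), genChoose (m + (d-1) - 1 - 2*j) (k - 2*j) := by
      intro S hS; subst hS
      apply Finset.sum_congr rfl
      intro j hj
      simp only [Finset.mem_range] at hj
      have h2j : 2*j ≤ k := by omega
      have e1 : k + 1 - 2*j = (k - 2*j) + 1 := by omega
      rw [e1]
      have e2 : (m + d - 1 - 2*(j:ℤ)) - 1 = m + (d-1) - 1 - 2*j := by ring
      have := gc_pascal (m + d - 1 - 2*(j:ℤ)) (k - 2*j)
      rw [e2] at this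
      rw [this]
      ring
    rcases Nat.even_or_odd k with he | ho
    · have hk2 := Nat.even_iff.mp he
      have e : (k+1)/2 = k/2 := by omega
      rw [e]
      exact congr_part _ rfl
    · have hk2 := Nat.odd_iff.mp ho
      have e : (k+1)/2 + 1 = (k/2 + 1) + 1 := by omega
      rw [e, Finset.sum_range_succ]
      have h2 : 2 * (k/2 + 1) = k + 1 := by omega
      have htop : genChoose (m + d - 1 - 2*(↑(k/2+1):ℤ)) (k+1 - 2*(k/2+1))
          - genChoose (m + (d-1) - 1 - 2*(↑(k/2+1):ℤ)) (k+1 - 2*(k/2+1)) = 0 := by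
        rw [h2]
        simp [gc_zero]
      rw [htop, add_zero]
      exact congr_part _ rfl
  linarith

lemma L_rec_m (m d : ℤ) (k : ℕ) :
    Lsum m d (k+1) = Lsum (m-1) d (k+1) + Lsum (m-2) (d+1) k := by
  have key : Lsum m d (k+1) - Lsum (m-1) d (k+1) = Lsum (m-2) (d+1) k := by
    unfold Lsum
    rw [← Finset.sum_sub_distrib, Finset.sum_range_succ']
    have hbot : genChoose (m - (0:ℕ)) 0 * genChoose (((0:ℕ) : ℤ) + d) (k+1-0)
        - genChoose (m - 1 - (0:ℕ)) 0 * genChoose (((0:ℕ) : ℤ) + d) (k+1-0) = 0 := by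
      simp [gc_zero]
    rw [hbot, add_zero]
    apply Finset.sum_congr rfl
    intro i hi
    simp only [Finset.mem_range] at hi
    have e1 : k + 1 - (i+1) = k - i := by omega
    rw [e1, ← sub_mul]
    have e2 : (m - ↑(i+1)) - 1 = (m - 2) - i := by push_cast; ring
    have e3 : m - 1 - ↑(i+1) = (m - 2) - (i:ℤ) := by push_cast; ring
    have := gc_pascal (m - ↑(i+1)) i
    rw [e2] at this
    rw [e3, this]
    have e4 : (↑(i+1) : ℤ) + d = (i:ℤ) + (d+1) := by push_cast; ring
    rw [e4]
    ring
  linarith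

lemma T_rec_m (m d : ℤ) (k : ℕ) :
    Tsum m d (k+1) = Tsum (m-1) d (k+1) + Tsum (m-2) (d+1) k := by
  have e1 : Tsum m d (k+1) = Tsum (m-1) (d+1) (k+1) := T_shift _ _ _ _ _ (by ring)
  have e2 := T_rec_d (m-1) (d+1) k
  have e3 : d + 1 - 1 = d := by ring
  rw [e3] at e2
  have e4 : Tsum (m-1) d k = Tsum (m-2) (d+1) k := T_shift _ _ _ _ _ (by ring)
  rw [e1, e2, e4]

lemma base (K : ℕ) : Lsum (K : ℤ) 0 K = Tsum (K : ℤ) 0 K := by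
  have hL : Lsum (K : ℤ) 0 K = if K % 2 = 0 then 1 else 0 := by
    unfold Lsum
    by_cases hK : K % 2 = 0
    · rw [if_pos hK]
      rw [Finset.sum_eq_single_of_mem (K/2)]
      · have e1 : ((K:ℤ) - ↑(K/2)) = ((K/2 : ℕ) : ℤ) := by omega
        have e2 : ((K/2 : ℕ) : ℤ) + 0 = ((K - K/2 : ℕ) : ℤ) := by omega
        rw [e1, e2, gc_self, gc_self, one_mul]
      · simp only [Finset.mem_range]; omega
      · intro i hi hne
        simp only [Finset.mem_range] at hi
        rcases lt_or_gt_of_ne hne with h | h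
        · rw [mul_eq_zero]; right
          rw [add_zero]
          exact gc_eq_zero _ _ (by positivity) (by omega)
        · rw [mul_eq_zero]; left
          exact gc_eq_zero _ _ (by omega) (by omega)
    · rw [if_neg hK]
      apply Finset.sum_eq_zero
      intro i hi
      simp only [Finset.mem_range] at hi
      rcases Nat.lt_or_ge (2*i) K with h | h
      · rw [mul_eq_zero]; right
        rw [add_zero]
        exact gc_eq_zero _ _ (by positivity) (by omega)
      · rw [mul_eq_zero]; left
        exact gc_eq_zero _ _ (by omega) (by omega)
  have hT : Tsum (K : ℤ) 0 K = if K % 2 = 0 then 1 else 0 := by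
    unfold Tsum
    by_cases hK : K % 2 = 0
    · rw [if_pos hK]
      rw [Finset.sum_eq_single_of_mem (K/2)]
      · have e : K - 2 * (K/2) = 0 := by omega
        rw [e, gc_zero]
      · simp only [Finset.mem_range]; omega
      · intro j hj hne
        simp only [Finset.mem_range] at hj
        exact gc_eq_zero _ _ (by omega) (by omega)
    · rw [if_neg hK]
      apply Finset.sum_eq_zero
      intro j hj
      simp only [Finset.mem_range] at hj
      exact gc_eq_zero _ _ (by omega) (by omega)
  rw [hL, hT]

lemma const_of (f : ℤ → ℚ) (h : ∀ x, f x = f (x - 1)) : ∀ a b : ℤ, f a = f b := by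
  have h0 : ∀ a : ℤ, f a = f 0 := by
    intro a
    induction a using Int.induction_on with
    | zero => rfl
    | succ n ih =>
      have := h ((n : ℤ) + 1)
      simp only [add_sub_cancel_right] at this
      rw [this, ih]
    | pred n ih =>
      rw [← h (-(n : ℤ))] at *
      exact ih
  intro a b
  rw [h0 a, h0 b]


lemma main_id : ∀ (K : ℕ) (m d : ℤ), Lsum m d K = Tsum m d K := by
  intro K
  induction K with
  | zero =>
    intro m d
    unfold Lsum Tsum
    simp [gc_zero]
  | succ k ih =>
    suffices h : ∀ m d : ℤ, Lsum m d (k+1) - Tsum m d (k+1) = 0 by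
      intro m d
      have := h m d
      linarith
    set D : ℤ → ℤ → ℚ := fun m d => Lsum m d (k+1) - Tsum m d (k+1) with hDdef
    show ∀ m d : ℤ, D m d = 0
    have hd : ∀ m d : ℤ, D m d = D m (d-1) := by
      intro m d
      simp only [hDdef]
      rw [L_rec_d, T_rec_d, ih m (d-1)]
      ring
    have hm : ∀ m d : ℤ, D m d = D (m-1) d := by
      intro m d
      simp only [hDdef]
      rw [L_rec_m, T_rec_m, ih (m-2) (d+1)]
      ring
    intro m d
    have h1 : D m d = D m 0 := const_of (D m) (hd m) d 0
    have h2 : D m 0 = D ((k+1 : ℕ) : ℤ) 0 :=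
      const_of (fun x => D x 0) (fun x => hm x 0) m ((k+1 : ℕ) : ℤ)
    rw [h1, h2]
    simp only [hDdef]
    rw [base (k+1)]
    ring

theorem stmt2 (m d : ℤ) (k : ℕ) (hd : (k : ℤ) - m ≤ d) :
    ∑ i ∈ Finset.range (k + 1),
        genChoose (m - i) i * genChoose ((i : ℤ) + d) (k - i) =
      ∑ j ∈ Finset.range (k / 2 + 1),
        genChoose (m + d - 1 - 2 * j) (k - 2 * j) := by
  have := main_id k m d
  unfold Lsum Tsum at this
  exact this
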